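/- If the condition of the previous convergence criterion fails for some r, i.e. E_r + F_r + 1 + max(Z_{r+1} + ⋯ + Z_s) ≥ 0 for some r ∈ {1,…,s}, then the subsum ∑_{k_r,…,k_s ≥ 0} ∏_{j=1}^{s} (k_j + 1)^{E_j} (k₁ + ⋯ + k_j + 1)^{F_j} (with k₁,…,k_{r−1} fixed, e.g. all zero) diverges; hence the conditions E_r + F_r + 1 + max(Z_{r+1}+⋯+Z_s) < 0 for all r = 1,…,s exactly describe the domain of convergence of the multiple series. -/

import Mathlib

open MeasureTheory

/-- Pochhammer symbol `(x)_k = x(x+1)⋯(x+k-1)`. -/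
noncomputable def poch (x : ℂ) (k : ℕ) : ℂ := ∏ i ∈ Finset.range k, (x + (i : ℂ))

/-- Generalized hypergeometric series with upper parameters `α`, lower parameters `β`. -/
noncomputable def hyp (α β : List ℂ) (z : ℂ) : ℂ :=
  ∑' k : ℕ, ((α.map fun w => poch w k).prod /
    ((β.map fun w => poch w k).prod * (Nat.factorial k : ℂ))) * z ^ k

/-- Nested expression: `nestR [x₁,…,x_m] = 1 - (1 - (⋯(1 - x_m)x_{m-1}⋯))x₁`. -/
def nestR : List ℝ → ℝ
  | [] => 1
  | t :: rest => 1 - nestR rest * t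

/-- The Vasilyev-type integral `J_m(a₀,…,a_m; b₁,…,b_m; z)`. -/
noncomputable def Jint (m : ℕ) (a b : ℕ → ℂ) (z : ℂ) : ℂ :=
  ∫ x in Set.univ.pi fun _ : Fin m => Set.Ioo (0:ℝ) 1,
    (∏ i : Fin m, ((x i : ℂ) ^ (a (i.1+1) - 1) *
        ((1 - x i : ℝ) : ℂ) ^ (b (i.1+1) - a (i.1+1) - 1))) /
      ((1 - ((nestR (List.ofFn x).tail * (List.ofFn x).headI : ℝ) : ℂ) * z) ^ (a 0))

/-- if the convergence condition fails for some `r`, then the subsum with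
`k₁, …, k_{r-1}` fixed to zero diverges (is not summable). As in Statement 2, the maximum
of the sum-set `Z_{r+1} + ⋯ + Z_s` is written as `∑_{j=r+1}^{s} max (F j) (E j + F j + 1)`. -/

lemma aux_base_change {c x y : ℝ} (G : ℝ) (hc : 1 ≤ c) (hy : 0 < y) (hyx : y ≤ x)
    (hxc : x ≤ c * y) : c ^ (-|G|) * y ^ G ≤ x ^ G := by
  rcases le_or_gt 0 G with hG | hG
  · rw [abs_of_nonneg hG]
    have h1 : c ^ (-G) ≤ 1 := by
      calc c ^ (-G) ≤ c ^ (0:ℝ) := Real.rpow_le_rpow_of_exponent_le hc (by linarith)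
        _ = 1 := Real.rpow_zero c
    calc c ^ (-G) * y ^ G ≤ 1 * y ^ G :=
          mul_le_mul_of_nonneg_right h1 (Real.rpow_nonneg hy.le G)
      _ = y ^ G := one_mul _
      _ ≤ x ^ G := Real.rpow_le_rpow hy.le hyx hG
  · rw [abs_of_neg hG, neg_neg]
    have h2 : c ^ G * y ^ G = (c * y) ^ G := (Real.mul_rpow (by linarith) hy.le).symm
    rw [h2]
    exact Real.rpow_le_rpow_of_nonpos (by linarith) hxc hG.le

lemma aux_sum_pow (Ej : ℝ) (hE : -1 ≤ Ej) (n : ℕ) :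
    (2:ℝ) ^ (-(Ej+1)) * ((n:ℝ)+1) ^ (Ej+1) ≤ ∑ k ∈ Finset.range (n+1), ((k:ℝ)+1) ^ Ej := by
  have hn1 : (0:ℝ) < (n:ℝ) + 1 := by positivity
  rcases le_or_gt 0 Ej with hE0 | hE0
  · -- terms on the upper half
    set m := (n+1)/2 with hm
    have hm1 : 2 * m ≤ n + 1 := by omega
    have hm2 : n + 1 ≤ 2 * m + 1 := by omega
    have hsub : Finset.Ico m (n+1) ⊆ Finset.range (n+1) := by
      intro x hx; simp only [Finset.mem_Ico] at hx; exact Finset.mem_range.2 hx.2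
    have h1 : ∑ k ∈ Finset.Ico m (n+1), ((k:ℝ)+1) ^ Ej ≤ ∑ k ∈ Finset.range (n+1), ((k:ℝ)+1) ^ Ej :=
      Finset.sum_le_sum_of_subset_of_nonneg hsub
        (fun k _ _ => Real.rpow_nonneg (by positivity) _)
    have h2 : (((n:ℝ)+1)/2) ^ (Ej+1) ≤ ∑ k ∈ Finset.Ico m (n+1), ((k:ℝ)+1) ^ Ej := by
      have hcard : (Finset.Ico m (n+1)).card = n + 1 - m := Nat.card_Ico m (n+1)
      have hterm : ∀ k ∈ Finset.Ico m (n+1), (((n:ℝ)+1)/2) ^ Ej ≤ ((k:ℝ)+1) ^ Ej := by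
        intro k hk
        simp only [Finset.mem_Ico] at hk
        apply Real.rpow_le_rpow (by positivity) _ hE0
        have : (n:ℝ) + 1 ≤ 2 * ((k:ℝ) + 1) := by
          have : n + 1 ≤ 2 * (k + 1) := by omega
          exact_mod_cast this
        linarith
      calc (((n:ℝ)+1)/2) ^ (Ej+1) = (((n:ℝ)+1)/2) ^ Ej * (((n:ℝ)+1)/2) := by
            rw [Real.rpow_add (by positivity), Real.rpow_one]
        _ ≤ (((n:ℝ)+1)/2) ^ Ej * ((n + 1 - m : ℕ):ℝ) := by
            apply mul_le_mul_of_nonneg_left _ (Real.rpow_nonneg (by positivity) _)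
            have : (n + 1 : ℝ) ≤ 2 * ((n + 1 - m : ℕ):ℝ) := by
              have : n + 1 ≤ 2 * (n + 1 - m) := by omega
              exact_mod_cast this
            linarith
        _ = ∑ k ∈ Finset.Ico m (n+1), (((n:ℝ)+1)/2) ^ Ej := by
            rw [Finset.sum_const, hcard, nsmul_eq_mul]; ring
        _ ≤ ∑ k ∈ Finset.Ico m (n+1), ((k:ℝ)+1) ^ Ej := Finset.sum_le_sum hterm
    have h3 : (2:ℝ) ^ (-(Ej+1)) * ((n:ℝ)+1) ^ (Ej+1) = (((n:ℝ)+1)/2) ^ (Ej+1) := by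
      rw [Real.div_rpow hn1.le (by norm_num), Real.rpow_neg (by norm_num)]
      ring
    linarith
  · -- each term at least (n+1)^Ej
    have h1 : ∀ k ∈ Finset.range (n+1), ((n:ℝ)+1) ^ Ej ≤ ((k:ℝ)+1) ^ Ej := by
      intro k hk
      apply Real.rpow_le_rpow_of_nonpos (by positivity) _ hE0.le
      have : (k:ℝ) ≤ (n:ℝ) := by exact_mod_cast Nat.lt_succ_iff.1 (Finset.mem_range.1 hk)
      linarith
    have h2 : ((n:ℝ)+1) * ((n:ℝ)+1) ^ Ej ≤ ∑ k ∈ Finset.range (n+1), ((k:ℝ)+1) ^ Ej := by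
      calc ((n:ℝ)+1) * ((n:ℝ)+1) ^ Ej = ∑ _k ∈ Finset.range (n+1), ((n:ℝ)+1) ^ Ej := by
            rw [Finset.sum_const, Finset.card_range, nsmul_eq_mul]; push_cast; ring
        _ ≤ _ := Finset.sum_le_sum h1
    have h3 : (2:ℝ) ^ (-(Ej+1)) ≤ 1 := by
      calc (2:ℝ) ^ (-(Ej+1)) ≤ (2:ℝ) ^ (0:ℝ) :=
            Real.rpow_le_rpow_of_exponent_le (by norm_num) (by linarith)
        _ = 1 := Real.rpow_zero 2
    have h4 : ((n:ℝ)+1) ^ (Ej+1) = ((n:ℝ)+1) ^ Ej * ((n:ℝ)+1) := by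
      rw [Real.rpow_add hn1, Real.rpow_one]
    nlinarith [Real.rpow_nonneg hn1.le (Ej+1), Real.rpow_nonneg hn1.le Ej]

set_option maxHeartbeats 2000000 in
theorem multisum_divergence (s : ℕ) (hs : 1 ≤ s) (E F : ℕ → ℝ)
    (r : ℕ) (hr1 : 1 ≤ r) (hrs : r ≤ s)
    (h : 0 ≤ E r + F r + 1 + ∑ j ∈ Finset.Icc (r+1) s, max (F j) (E j + F j + 1)) :
    ¬ Summable (fun k : {k : Fin s → ℕ // ∀ i : Fin s, i.1 + 1 < r → k i = 0} =>
      ∏ j : Fin s, ((k.1 j : ℝ) + 1) ^ (E (j.1+1)) *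
        ((∑ i ∈ Finset.Iic j, (k.1 i : ℝ)) + 1) ^ (F (j.1+1))) := by
  classical
  intro hSum
  have hjrlt : r - 1 < s := by omega
  set jr : Fin s := ⟨r - 1, hjrlt⟩ with hjrdef
  have hjrv : (jr : ℕ) = r - 1 := rfl
  have hjr1 : (jr : ℕ) + 1 = r := by omega
  -- plain version of the summand
  set F0 : (Fin s → ℕ) → ℝ := fun k =>
    ∏ j : Fin s, ((k j : ℝ) + 1) ^ (E (j.1+1)) *
      ((∑ i ∈ Finset.Iic j, (k i : ℝ)) + 1) ^ (F (j.1+1)) with hF0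
  have hF0pos : ∀ k, 0 < F0 k := by
    intro k
    apply Finset.prod_pos
    intro j _
    have h1 : (0:ℝ) < (k j : ℝ) + 1 := by positivity
    have h2 : (0:ℝ) < (∑ i ∈ Finset.Iic j, (k i : ℝ)) + 1 := by
      have : (0:ℝ) ≤ ∑ i ∈ Finset.Iic j, (k i : ℝ) :=
        Finset.sum_nonneg fun i _ => Nat.cast_nonneg _
      linarith
    exact mul_pos (Real.rpow_pos_of_pos h1 _) (Real.rpow_pos_of_pos h2 _)
  -- index sets
  set U : Finset (Fin s) := Finset.univ.filter (fun j => jr < j) with hU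
  set T : Finset (Fin s) := Finset.univ.filter (fun j => jr < j ∧ 0 ≤ E (j.1+1) + 1) with hT
  -- reindexing the hypothesis
  have hmap : U.map ⟨fun j : Fin s => j.1 + 1, show Function.Injective (fun j : Fin s => j.1 + 1) from fun a b hab => Fin.ext (add_right_cancel hab)⟩
      = Finset.Icc (r+1) s := by
    ext a
    simp only [Finset.mem_map, Function.Embedding.coeFn_mk, hU, Finset.mem_filter,
      Finset.mem_univ, true_and, Finset.mem_Icc, Fin.lt_def, hjrv]
    constructor
    · rintro ⟨j, hj, rfl⟩
      have := j.2
      omega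
    · rintro ⟨h1, h2⟩
      refine ⟨⟨a - 1, by omega⟩, ?_, ?_⟩ <;> simp <;> omega
  have hre : ∑ j ∈ Finset.Icc (r+1) s, max (F j) (E j + F j + 1)
      = ∑ j ∈ U, F (j.1+1) + ∑ j ∈ T, (E (j.1+1) + 1) := by
    rw [← hmap, Finset.sum_map]
    simp only [Function.Embedding.coeFn_mk]
    have h1 : ∀ j ∈ U, max (F (j.1+1)) (E (j.1+1) + F (j.1+1) + 1)
        = F (j.1+1) + (if 0 ≤ E (j.1+1) + 1 then E (j.1+1) + 1 else 0) := by
      intro j _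
      split_ifs with hc
      · rw [max_eq_right (by linarith)]; ring
      · rw [max_eq_left (by linarith)]; ring
    rw [Finset.sum_congr rfl h1, Finset.sum_add_distrib]
    congr 1
    have hTU : T = U.filter (fun j => 0 ≤ E (j.1+1) + 1) := by
      rw [hT, hU, Finset.filter_filter]
    rw [hTU]
    exact (Finset.sum_filter _ _).symm
  set A : ℝ := E r + F r + (∑ j ∈ U, F (j.1+1) + ∑ j ∈ T, (E (j.1+1) + 1)) with hA
  have hA1 : -1 ≤ A := by rw [hA, ← hre]; linarith
  -- constants
  set c0 : ℝ := ∏ j ∈ U, ((s:ℝ)+1) ^ (-|F (j.1+1)|) with hc0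
  set c1 : ℝ := ∏ j ∈ T, (2:ℝ) ^ (-(E (j.1+1)+1)) with hc1
  have hc0pos : 0 < c0 := Finset.prod_pos fun j _ => Real.rpow_pos_of_pos (by positivity) _
  have hc1pos : 0 < c1 := Finset.prod_pos fun j _ => Real.rpow_pos_of_pos (by norm_num) _
  set C : ℝ := c0 * c1 with hC
  have hCpos : 0 < C := mul_pos hc0pos hc1pos
  -- the boxes
  set t : ℕ → Fin s → Finset ℕ := fun n j =>
    if j = jr then {n} else if jr < j ∧ 0 ≤ E (j.1+1) + 1 then Finset.range (n+1) else {0}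
    with ht
  set P : (Fin s → ℕ) → Prop := fun k => ∀ i : Fin s, i.1 + 1 < r → k i = 0 with hP
  set B : ℕ → Finset {k : Fin s → ℕ // ∀ i : Fin s, i.1 + 1 < r → k i = 0} :=
    fun n => (Fintype.piFinset (t n)).subtype _ with hB
  have hPall : ∀ n, ∀ k ∈ Fintype.piFinset (t n), ∀ i : Fin s, i.1 + 1 < r → k i = 0 := by
    intro n k hk i hi
    have hmem := Fintype.mem_piFinset.1 hk i
    have hne : i ≠ jr := by
      intro hij; rw [hij] at hi; omega
    have hnlt : ¬ jr < i := by
      simp only [Fin.lt_def, hjrdef]; omega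
    rw [ht] at hmem
    simp only [if_neg hne, if_neg (fun hc : jr < i ∧ _ => hnlt hc.1)] at hmem
    exact Finset.mem_singleton.1 hmem
  
  -- constant factors per coordinate
  set cc : ℕ → Fin s → ℝ := fun n j =>
    (if j = jr then ((n:ℝ)+1) ^ (E r + F r) else 1) *
    (if jr < j then ((s:ℝ)+1) ^ (-|F (j.1+1)|) * ((n:ℝ)+1) ^ (F (j.1+1)) else 1) with hcc
  set g : Fin s → ℕ → ℝ := fun j x =>
    if jr < j ∧ 0 ≤ E (j.1+1) + 1 then ((x:ℝ)+1) ^ (E (j.1+1)) else 1 with hg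
  have hgnn : ∀ j x, 0 ≤ g j x := by
    intro j x
    rw [hg]; dsimp only; split_ifs
    · exact Real.rpow_nonneg (by positivity) _
    · norm_num
  have hccnn : ∀ n j, 0 ≤ cc n j := by
    intro n j
    rw [hcc]; dsimp only
    apply mul_nonneg <;> split_ifs
    · exact Real.rpow_nonneg (by positivity) _
    · norm_num
    · exact mul_nonneg (Real.rpow_nonneg (by positivity) _) (Real.rpow_nonneg (by positivity) _)
    · norm_num
  have hccprod : ∀ n : ℕ, ∏ j : Fin s, cc n j
      = ((n:ℝ)+1) ^ (E r + F r) * (c0 * ((n:ℝ)+1) ^ (∑ j ∈ U, F (j.1+1))) := by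
    intro n
    have hn1 : (0:ℝ) < (n:ℝ)+1 := by positivity
    rw [hcc]; dsimp only
    rw [Finset.prod_mul_distrib]
    congr 1
    · rw [Finset.prod_ite_eq' Finset.univ jr (fun _ => ((n:ℝ)+1) ^ (E r + F r))]
      simp
    · rw [← Finset.prod_filter, ← hU, Finset.prod_mul_distrib, hc0,
        Real.rpow_sum_of_pos hn1]
  -- key pointwise bound
  have hpoint : ∀ n : ℕ, ∀ k ∈ Fintype.piFinset (t n),
      ∏ j : Fin s, (cc n j * g j (k j)) ≤ F0 k := by
    intro n k hk
    have hn1 : (0:ℝ) < (n:ℝ)+1 := by positivity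
    have hkmem : ∀ j, k j ∈ t n j := fun j => Fintype.mem_piFinset.1 hk j
    have hkjr : k jr = n := by
      have := hkmem jr
      rw [ht] at this; simpa using this
    have hk0 : ∀ j, j ≠ jr → ¬(jr < j ∧ 0 ≤ E (j.1+1) + 1) → k j = 0 := by
      intro j h1 h2
      have := hkmem j
      rw [ht] at this; dsimp only at this
      rw [if_neg h1, if_neg h2] at this
      simpa using this
    have hkle : ∀ j, k j ≤ n := by
      intro j
      have := hkmem j
      rw [ht] at this; dsimp only at this
      split_ifs at this
      · simp at this; omega
      · simp only [Finset.mem_range] at this; omega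
      · simp at this; omega
    have hlt0 : ∀ j, j < jr → k j = 0 := fun j hj =>
      hk0 j hj.ne (fun hc => absurd hc.1 (asymm hj))
    have hKlt : ∀ j, j < jr → ∑ i ∈ Finset.Iic j, k i = 0 := by
      intro j hj
      apply Finset.sum_eq_zero
      intro i hi
      exact hlt0 i (lt_of_le_of_lt (Finset.mem_Iic.1 hi) hj)
    have hKjr : ∑ i ∈ Finset.Iic jr, k i = n := by
      rw [Finset.sum_eq_single jr]
      · exact hkjr
      · intro i hi hne
        exact hlt0 i (lt_of_le_of_ne (Finset.mem_Iic.1 hi) hne)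
      · intro hmem'; exact absurd (Finset.mem_Iic.2 le_rfl) hmem'
    have hKge : ∀ j, jr < j → n ≤ ∑ i ∈ Finset.Iic j, k i := by
      intro j hj
      rw [← hkjr]
      exact Finset.single_le_sum (fun i _ => Nat.zero_le _) (Finset.mem_Iic.2 hj.le)
    have hKub : ∀ j : Fin s, (∑ i ∈ Finset.Iic j, k i) ≤ s * n := by
      intro j
      calc ∑ i ∈ Finset.Iic j, k i ≤ ∑ _i ∈ Finset.Iic j, n :=
            Finset.sum_le_sum fun i _ => hkle i
        _ = (Finset.Iic j).card * n := by rw [Finset.sum_const, smul_eq_mul]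
        _ ≤ s * n := Nat.mul_le_mul_right _
            (le_trans (Finset.card_le_univ _) (by simp))
    rw [hF0]; dsimp only
    apply Finset.prod_le_prod
    · intro j _
      exact mul_nonneg (hccnn n j) (hgnn j _)
    · intro j _
      rcases lt_trichotomy j jr with hj | hj | hj
      · -- j < jr : everything is 1
        have e1 : cc n j = 1 := by
          rw [hcc]; dsimp only
          rw [if_neg hj.ne, if_neg (asymm hj), one_mul]
        have e2 : g j (k j) = 1 := by
          rw [hg]; dsimp only
          rw [if_neg (fun hc => absurd hc.1 (asymm hj))]
        rw [e1, e2, hlt0 j hj, ← Nat.cast_sum, hKlt j hj]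
        norm_num [Real.one_rpow]
      · -- j = jr : exact computation
        have e1 : cc n j = ((n:ℝ)+1) ^ (E r + F r) := by
          rw [hcc]; dsimp only
          rw [if_pos hj, if_neg (by rw [hj]; exact lt_irrefl jr), mul_one]
        have e2 : g j (k j) = 1 := by
          rw [hg]; dsimp only
          rw [if_neg (by intro hc; rw [hj] at hc; exact absurd hc.1 (lt_irrefl jr))]
        rw [e1, e2, mul_one, hj, hkjr, ← Nat.cast_sum, hKjr, hjr1,
          ← Real.rpow_add hn1]
      · -- jr < j
        have hjne : j ≠ jr := hj.ne'
        have e1 : cc n j = ((s:ℝ)+1) ^ (-|F (j.1+1)|) * ((n:ℝ)+1) ^ (F (j.1+1)) := by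
          rw [hcc]; dsimp only
          rw [if_neg hjne, if_pos hj, one_mul]
        have h1 : g j (k j) ≤ ((k j : ℝ)+1) ^ (E (j.1+1)) := by
          rw [hg]; dsimp only
          split_ifs with hcnd
          · exact le_refl _
          · rw [hk0 j hjne hcnd]
            norm_num [Real.one_rpow]
        have h2 : ((s:ℝ)+1) ^ (-|F (j.1+1)|) * ((n:ℝ)+1) ^ (F (j.1+1))
            ≤ ((∑ i ∈ Finset.Iic j, (k i : ℝ)) + 1) ^ (F (j.1+1)) := by
          rw [← Nat.cast_sum]
          apply aux_base_change _
            (by have : (0:ℝ) ≤ (s:ℝ) := Nat.cast_nonneg s; linarith) hn1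
          · have h' := hKge j hj
            have : (n:ℝ) ≤ ((∑ i ∈ Finset.Iic j, k i : ℕ) : ℝ) := Nat.cast_le.2 h'
            linarith
          · have h' := hKub j
            have h'' : ((∑ i ∈ Finset.Iic j, k i : ℕ) : ℝ) ≤ (s:ℝ) * (n:ℝ) := by
              exact_mod_cast h'
            have hs0 : (0:ℝ) ≤ (s:ℝ) := Nat.cast_nonneg s
            have hn0 : (0:ℝ) ≤ (n:ℝ) := Nat.cast_nonneg n
            nlinarith
        rw [e1]
        refine le_trans (mul_le_mul h2 h1 (hgnn j _) (Real.rpow_nonneg ?_ _))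
          (le_of_eq (mul_comm _ _))
        have : (0:ℝ) ≤ ∑ i ∈ Finset.Iic j, (k i : ℝ) :=
          Finset.sum_nonneg fun i _ => Nat.cast_nonneg _
        linarith
  -- key estimate per n
  have key : ∀ n : ℕ, C * (((n:ℝ)+1) ^ (-1 : ℝ)) ≤ ∑ k ∈ B n, F0 k.1 := by
    intro n
    have hn1 : (0:ℝ) < (n:ℝ)+1 := by positivity
    have hn1' : (1:ℝ) ≤ (n:ℝ)+1 := by
      have : (0:ℝ) ≤ (n:ℝ) := Nat.cast_nonneg n
      linarith
    have hsub : ∑ k ∈ B n, F0 k.1 = ∑ k ∈ Fintype.piFinset (t n), F0 k := by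
      rw [hB]
      exact Finset.sum_subtype_of_mem _ (hPall n)
    have hprodsum : c1 * ((n:ℝ)+1) ^ (∑ j ∈ T, (E (j.1+1)+1))
        ≤ ∏ j : Fin s, ∑ x ∈ t n j, g j x := by
      calc c1 * ((n:ℝ)+1) ^ (∑ j ∈ T, (E (j.1+1)+1))
          = ∏ j ∈ T, ((2:ℝ) ^ (-(E (j.1+1)+1)) * ((n:ℝ)+1) ^ (E (j.1+1)+1)) := by
            rw [hc1, Real.rpow_sum_of_pos hn1, ← Finset.prod_mul_distrib]
        _ = ∏ j : Fin s, (if jr < j ∧ 0 ≤ E (j.1+1) + 1 then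
              (2:ℝ) ^ (-(E (j.1+1)+1)) * ((n:ℝ)+1) ^ (E (j.1+1)+1) else 1) := by
            rw [hT]
            exact Finset.prod_filter _ _
        _ ≤ ∏ j : Fin s, ∑ x ∈ t n j, g j x := by
            apply Finset.prod_le_prod
            · intro j _
              split_ifs
              · exact mul_nonneg (Real.rpow_nonneg (by norm_num) _)
                  (Real.rpow_nonneg hn1.le _)
              · norm_num
            · intro j _
              split_ifs with hcnd
              · have hjne : j ≠ jr := hcnd.1.ne'
                have htj : t n j = Finset.range (n+1) := by
                  rw [ht]; dsimp only
                  rw [if_neg hjne, if_pos hcnd]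
                rw [htj]
                have hgj : ∀ x ∈ Finset.range (n+1), g j x = ((x:ℝ)+1) ^ (E (j.1+1)) := by
                  intro x _
                  rw [hg]; dsimp only
                  rw [if_pos hcnd]
                rw [Finset.sum_congr rfl hgj]
                exact aux_sum_pow _ (by linarith [hcnd.2]) n
              · have hgj : ∀ x ∈ t n j, g j x = 1 := by
                  intro x _
                  rw [hg]; dsimp only
                  rw [if_neg hcnd]
                rw [Finset.sum_congr rfl hgj, Finset.sum_const, nsmul_eq_mul, mul_one]
                have : 1 ≤ (t n j).card := by
                  rw [ht]; dsimp only
                  split_ifs <;> simp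
                exact_mod_cast this
    calc C * (((n:ℝ)+1) ^ (-1 : ℝ))
        ≤ C * ((n:ℝ)+1) ^ A :=
          mul_le_mul_of_nonneg_left
            (Real.rpow_le_rpow_of_exponent_le hn1' hA1) hCpos.le
      _ = (∏ j : Fin s, cc n j) * (c1 * ((n:ℝ)+1) ^ (∑ j ∈ T, (E (j.1+1)+1))) := by
          rw [hccprod n, hA, hC, Real.rpow_add hn1, Real.rpow_add hn1,
            Real.rpow_add hn1]
          ring
      _ ≤ (∏ j : Fin s, cc n j) * (∏ j : Fin s, ∑ x ∈ t n j, g j x) :=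
          mul_le_mul_of_nonneg_left hprodsum
            (Finset.prod_nonneg fun j _ => hccnn n j)
      _ = ∑ k ∈ Fintype.piFinset (t n), (∏ j : Fin s, cc n j) * ∏ j : Fin s, g j (k j) := by
          rw [Finset.prod_univ_sum, ← Finset.mul_sum]
      _ ≤ ∑ k ∈ Fintype.piFinset (t n), F0 k := by
          apply Finset.sum_le_sum
          intro k hk
          rw [← Finset.prod_mul_distrib]
          exact hpoint n k hk
      _ = ∑ k ∈ B n, F0 k.1 := hsub.symm
  -- conclusion
  have hSum' : Summable (fun k : {k : Fin s → ℕ // ∀ i : Fin s, i.1 + 1 < r → k i = 0} =>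
      F0 k.1) := hSum
  have hdisj : ∀ N : ℕ, Set.PairwiseDisjoint ↑(Finset.range N) B := by
    intro N a _ b _ hab
    simp only [Function.onFun]
    rw [Finset.disjoint_left]
    intro k hka hkb
    rw [hB] at hka hkb
    have h1 := Fintype.mem_piFinset.1 (Finset.mem_subtype.1 hka) jr
    have h2 := Fintype.mem_piFinset.1 (Finset.mem_subtype.1 hkb) jr
    rw [ht] at h1 h2
    simp at h1 h2
    exact hab (h1 ▸ h2)
  have hub : ∀ N : ℕ, ∑ n ∈ Finset.range N, C * (((n:ℝ)+1) ^ (-1 : ℝ))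
      ≤ ∑' k : {k : Fin s → ℕ // ∀ i : Fin s, i.1 + 1 < r → k i = 0}, F0 k.1 := by
    intro N
    have s1 : ∑ n ∈ Finset.range N, C * (((n:ℝ)+1) ^ (-1 : ℝ))
        ≤ ∑ n ∈ Finset.range N, ∑ k ∈ B n, F0 k.1 :=
      Finset.sum_le_sum fun n _ => key n
    have s2 : ∑ n ∈ Finset.range N, ∑ k ∈ B n, F0 k.1
        = ∑ k ∈ (Finset.range N).disjiUnion B (hdisj N), F0 k.1 :=
      (Finset.sum_disjiUnion _ _ _).symm
    have s3 : ∑ k ∈ (Finset.range N).disjiUnion B (hdisj N), F0 k.1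
        ≤ ∑' k : {k : Fin s → ℕ // ∀ i : Fin s, i.1 + 1 < r → k i = 0}, F0 k.1 :=
      Summable.sum_le_tsum _ (fun k _ => (hF0pos k.1).le) hSum'
    exact le_trans (le_trans s1 (le_of_eq s2)) s3
  have hharm : Filter.Tendsto
      (fun N => ∑ n ∈ Finset.range N, C * (((n:ℝ)+1) ^ (-1 : ℝ)))
      Filter.atTop Filter.atTop := by
    have h0 : (fun N => ∑ n ∈ Finset.range N, C * (((n:ℝ)+1) ^ (-1 : ℝ)))
        = fun N => C * ∑ n ∈ Finset.range N, 1/((n:ℝ)+1) := by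
      funext N
      rw [Finset.mul_sum]
      refine Finset.sum_congr rfl fun n _ => ?_
      rw [Real.rpow_neg_one, one_div]
    rw [h0]
    exact (Real.tendsto_sum_range_one_div_nat_succ_atTop).const_mul_atTop hCpos
  obtain ⟨N, hN⟩ := (hharm.eventually_gt_atTop
    (∑' k : {k : Fin s → ℕ // ∀ i : Fin s, i.1 + 1 < r → k i = 0}, F0 k.1)).exists
  exact absurd (hub N) (not_le.2 hN)
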